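/- Let Λ, Ω, Y be normed vector spaces, X a reflexive Banach space, and D a nonempty compact convex subset of X. Let K : D × Λ → 2^D and F : D × D × Ω → 2^Y be set-valued mappings and C ⊆ Y a closed set with nonempty interior; define M₁(u, λ) = {x ∈ cl K(x, λ) : F(x, y, u) ∩ (Y \ (−int C)) ≠ ∅ for all y ∈ K(x, λ)}, and assume M₁(u, λ) ≠ ∅ for all (u, λ) in a neighborhood of (u₀, λ₀) ∈ Ω × Λ. Assume: (i) K(·, λ₀) is rotund and K is continuous at every point of D × {λ₀} with nonempty closed convex values; (ii) F is lower semicontinuous at every point of D × D × {u₀}; (iii) for every x ∈ M₁(u₀, λ₀) and every y ∈ K(x, λ₀), F(x, y, u₀) ∩ (Y \ (−C)) ≠ ∅. Then M₁(·, ·) is lower semicontinuous at (u₀, λ₀). -/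

import Mathlib

open Filter Topology Set Pointwise Metric

lemma mem_of_closedBall_approx {X : Type*} [NormedAddCommGroup X] [NormedSpace ℝ X]
    {s : Set X} (hconv : Convex ℝ s) (hclosed : IsClosed s) {w : X} {ε : ℝ} (hε : 0 < ε)
    (hnear : ∀ z ∈ closedBall w (ε/2), ∃ c ∈ s, dist z c < ε/8) : w ∈ s := by
  by_contra hw
  obtain ⟨f, u, hfu, hult⟩ := geometric_hahn_banach_closed_point hconv hclosed hw
  obtain ⟨c₀, hc₀s, -⟩ := hnear w (mem_closedBall_self (by positivity))
  have hfne : f ≠ 0 := by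
    intro h
    have h1 := hfu c₀ hc₀s
    rw [h] at h1 hult
    simp at h1 hult
    linarith
  have hfpos : 0 < ‖f‖ := by
    rcases lt_or_eq_of_le (norm_nonneg f) with h | h
    · exact h
    · exact absurd ((ContinuousLinearMap.opNorm_zero_iff f).mp h.symm) hfne
  obtain ⟨x, hx1, hx2⟩ := f.exists_lt_apply_of_lt_opNorm (r := (3/4) * ‖f‖) (by nlinarith)
  have hx2' : (3/4) * ‖f‖ < |f x| := by rwa [Real.norm_eq_abs] at hx2
  set v : X := if 0 ≤ f x then x else -x with hv
  have hvnorm : ‖v‖ ≤ 1 := by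
    rw [hv]; split_ifs <;> [skip; rw [norm_neg]] <;> exact hx1.le
  have hfv : (3/4) * ‖f‖ < f v := by
    rw [hv]; split_ifs with h
    · rwa [abs_of_nonneg h] at hx2'
    · rw [map_neg]; rwa [abs_of_neg (lt_of_not_ge h)] at hx2'
  set z : X := w + (ε/2) • v with hz
  have hzmem : z ∈ closedBall w (ε/2) := by
    rw [hz, mem_closedBall, dist_eq_norm]
    simp only [add_sub_cancel_left, norm_smul, Real.norm_eq_abs, abs_of_pos (by positivity : (0:ℝ) < ε/2)]
    nlinarith
  obtain ⟨c, hcs, hdzc⟩ := hnear z hzmem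
  have h1 : f z - f c ≤ ‖f‖ * ‖z - c‖ := by
    calc f z - f c = f (z - c) := by rw [map_sub]
    _ ≤ ‖f (z - c)‖ := le_abs_self _
    _ ≤ ‖f‖ * ‖z - c‖ := f.le_opNorm _
  have h2 : ‖z - c‖ < ε/8 := by rwa [← dist_eq_norm]
  have h3 : f z = f w + (ε/2) * f v := by rw [hz, map_add, map_smul]; simp
  have h4 := hfu c hcs
  nlinarith [hfpos, hfv, hult, mul_lt_mul_of_pos_left h2 hfpos,
    mul_lt_mul_of_pos_left hfv (by positivity : (0:ℝ) < ε/2)]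
def LscAt {Δ Δ₁ : Type*} [TopologicalSpace Δ] [TopologicalSpace Δ₁]
    (Φ : Δ → Set Δ₁) (u₀ : Δ) : Prop :=
  ∀ x ∈ Φ u₀, ∀ V : Set Δ₁, IsOpen V → x ∈ V →
    ∃ U ∈ 𝓝 u₀, ∀ u ∈ U, (Φ u ∩ V).Nonempty

/-- Lower semicontinuity at `u₀` of a set-valued mapping whose domain is the subset `s`
(neighborhoods are taken relative to `s`). -/
def LscWithinAt {Δ Δ₁ : Type*} [TopologicalSpace Δ] [TopologicalSpace Δ₁]
    (Φ : Δ → Set Δ₁) (s : Set Δ) (u₀ : Δ) : Prop :=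
  ∀ x ∈ Φ u₀, ∀ V : Set Δ₁, IsOpen V → x ∈ V →
    ∃ U ∈ 𝓝[s] u₀, ∀ u ∈ U, (Φ u ∩ V).Nonempty

/-- A set-valued mapping `Φ` is upper semicontinuous at `u₀` if for every open `V ⊇ Φ(u₀)`
there is a neighborhood `U` of `u₀` with `Φ(u) ⊆ V` for all `u ∈ U`. -/
def UscAt {Δ Δ₁ : Type*} [TopologicalSpace Δ] [TopologicalSpace Δ₁]
    (Φ : Δ → Set Δ₁) (u₀ : Δ) : Prop :=
  ∀ V : Set Δ₁, IsOpen V → Φ u₀ ⊆ V → ∃ U ∈ 𝓝 u₀, ∀ u ∈ U, Φ u ⊆ V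

/-- Upper semicontinuity at `u₀` of a set-valued mapping whose domain is the subset `s`
(neighborhoods are taken relative to `s`). -/
def UscWithinAt {Δ Δ₁ : Type*} [TopologicalSpace Δ] [TopologicalSpace Δ₁]
    (Φ : Δ → Set Δ₁) (s : Set Δ) (u₀ : Δ) : Prop :=
  ∀ V : Set Δ₁, IsOpen V → Φ u₀ ⊆ V → ∃ U ∈ 𝓝[s] u₀, ∀ u ∈ U, Φ u ⊆ V

/-- The graph of a set-valued mapping `Φ` with domain `A`. -/
def GraphOn {X Z : Type*} (A : Set X) (Φ : X → Set Z) : Set (X × Z) :=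
  {p | p.1 ∈ A ∧ p.2 ∈ Φ p.1}

/-- A set-valued mapping `Φ` with domain `A` is rotund if its graph is convex and, for any
two points of the graph with distinct first components and distinct second components,
the open segment between them meets the complement of the boundary of the graph. -/
def RotundOn {X Z : Type*} [NormedAddCommGroup X] [NormedSpace ℝ X]
    [NormedAddCommGroup Z] [NormedSpace ℝ Z] (A : Set X) (Φ : X → Set Z) : Prop :=
  Convex ℝ (GraphOn A Φ) ∧
    ∀ p ∈ GraphOn A Φ, ∀ q ∈ GraphOn A Φ, p.1 ≠ q.1 → p.2 ≠ q.2 →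
      ∃ l ∈ Set.Ioo (0 : ℝ) 1, l • p + (1 - l) • q ∈ (frontier (GraphOn A Φ))ᶜ

/-- Theorem 4.1: lower semicontinuity at `(u₀, λ₀)` of the solution mapping
`M₁(u, λ) = {x ∈ cl K(x,λ) : F(x,y,u) ∩ (Y \ −int C) ≠ ∅ for all y ∈ K(x,λ)}` of the
parametric vector quasiequilibrium problem, under: `K(·,λ₀)` rotund, `K` continuous at
every point of `D × {λ₀}` with nonempty closed convex values, `F` l.s.c. at every point of
`D × D × {u₀}`, and `F(x,y,u₀) ∩ (Y \ −C) ≠ ∅` for all `x ∈ M₁(u₀,λ₀)`, `y ∈ K(x,λ₀)`.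
Reflexivity of the Banach space `X` is encoded as surjectivity of the canonical inclusion
into the double dual. -/
theorem stmt_12 {Λ Ω Y X : Type*}
    [NormedAddCommGroup Λ] [NormedSpace ℝ Λ]
    [NormedAddCommGroup Ω] [NormedSpace ℝ Ω]
    [NormedAddCommGroup Y] [NormedSpace ℝ Y]
    [NormedAddCommGroup X] [NormedSpace ℝ X] [CompleteSpace X]
    (hrefl : Function.Surjective (NormedSpace.inclusionInDoubleDual ℝ X))
    (D : Set X) (hDne : D.Nonempty) (hDcomp : IsCompact D) (hDconv : Convex ℝ D)
    (K : X → Λ → Set X) (hKD : ∀ x ∈ D, ∀ l : Λ, K x l ⊆ D)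
    (F : X → X → Ω → Set Y)
    (C : Set Y) (hCclosed : IsClosed C) (hCint : (interior C).Nonempty)
    (u₀ : Ω) (l₀ : Λ)
    (M₁ : Ω × Λ → Set X)
    (hM₁ : ∀ p : Ω × Λ, M₁ p = {x | x ∈ D ∧ x ∈ closure (K x p.2) ∧
      ∀ y ∈ K x p.2, (F x y p.1 ∩ (-(interior C))ᶜ).Nonempty})
    (hMne : ∃ U ∈ 𝓝 ((u₀, l₀) : Ω × Λ), ∀ p ∈ U, (M₁ p).Nonempty)
    (hKrot : RotundOn D (fun x => K x l₀))
    (hKcont : ∀ x ∈ D,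
      UscWithinAt (fun p : X × Λ => K p.1 p.2) (D ×ˢ (univ : Set Λ)) (x, l₀) ∧
      LscWithinAt (fun p : X × Λ => K p.1 p.2) (D ×ˢ (univ : Set Λ)) (x, l₀))
    (hKval : ∀ x ∈ D, ∀ l : Λ, (K x l).Nonempty ∧ IsClosed (K x l) ∧ Convex ℝ (K x l))
    (hFlsc : ∀ x ∈ D, ∀ y ∈ D,
      LscWithinAt (fun q : X × X × Ω => F q.1 q.2.1 q.2.2)
        (D ×ˢ D ×ˢ (univ : Set Ω)) (x, y, u₀))
    (hF3 : ∀ x ∈ M₁ (u₀, l₀), ∀ y ∈ K x l₀, (F x y u₀ ∩ (-C)ᶜ).Nonempty) :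
    LscAt M₁ (u₀, l₀) := by
  classical
  by_contra hns
  unfold LscAt at hns
  push_neg at hns
  obtain ⟨x₀, hx₀M, V, hVopen, hx₀V, hbad⟩ := hns
  have hx₀M' := hx₀M
  rw [hM₁] at hx₀M'
  obtain ⟨hx₀D, hx₀cl, hx₀F⟩ := hx₀M'
  have hx₀K : x₀ ∈ K x₀ l₀ := by
    rwa [(hKval x₀ hx₀D l₀).2.1.closure_eq] at hx₀cl
  -- the "bad" set S
  set S : Set (Ω × Λ) := {p | (M₁ p).Nonempty ∧ M₁ p ∩ V = ∅} with hS
  obtain ⟨U₀, hU₀, hU₀ne⟩ := hMne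
  have hScl : ∀ U ∈ 𝓝 ((u₀, l₀) : Ω × Λ), (U ∩ S).Nonempty := by
    intro U hU
    obtain ⟨p, hpU, hpbad⟩ := hbad (U ∩ U₀) (inter_mem hU hU₀)
    exact ⟨p, hpU.1, hU₀ne p hpU.2, hpbad⟩
  haveI hfne : (𝓝[S] ((u₀, l₀) : Ω × Λ)).NeBot :=
    mem_closure_iff_nhdsWithin_neBot.mp (mem_closure_iff_nhds.mpr hScl)
  set f : Filter (Ω × Λ) := 𝓝[S] ((u₀, l₀) : Ω × Λ) with hf
  -- a selection of solutions
  set χ : Ω × Λ → X := fun p => if h : (M₁ p).Nonempty then h.choose else hDne.choose with hχdef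
  have hχ : ∀ p ∈ S, χ p ∈ M₁ p := by
    intro p hp
    simp only [hχdef, dif_pos hp.1]
    exact hp.1.choose_spec
  have hχD : ∀ p ∈ S, χ p ∈ D := by
    intro p hp
    have := hχ p hp
    rw [hM₁] at this
    exact this.1
  have hχV : ∀ p ∈ S, χ p ∉ V := by
    intro p hp hv
    have : χ p ∈ M₁ p ∩ V := ⟨hχ p hp, hv⟩
    rw [hp.2] at this
    exact this
  -- cluster point of the solutions
  have hgD : Filter.map χ f ≤ Filter.principal D :=
    Filter.le_principal_iff.mpr
      (Filter.mem_map.mpr (mem_of_superset self_mem_nhdsWithin fun p hp => hχD p hp))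
  obtain ⟨xb, hxbD, hxbcp⟩ := hDcomp hgD
  have hfreq : ∀ A ∈ 𝓝 xb, ∀ E ∈ f, ∃ p ∈ E, χ p ∈ A := by
    intro A hA E hE
    obtain ⟨a, haA, haE⟩ := clusterPt_iff_nonempty.mp hxbcp hA (Filter.image_mem_map hE)
    obtain ⟨p, hpE, rfl⟩ := haE
    exact ⟨p, hpE, haA⟩
  have hxbV : xb ∉ V := by
    have h1 : Vᶜ ∈ Filter.map χ f :=
      Filter.mem_map.mpr (mem_of_superset self_mem_nhdsWithin fun p hp => hχV p hp)
    have h2 := hxbcp.mono (Filter.le_principal_iff.mpr h1)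
    have h3 : xb ∈ closure Vᶜ := mem_closure_iff_clusterPt.mpr h2
    rwa [hVopen.isClosed_compl.closure_eq] at h3
  -- xb is a fixed point of K(·, l₀)
  have hxbK : xb ∈ K xb l₀ := by
    by_contra hnot
    obtain ⟨hKne, hKcl, -⟩ := hKval xb hxbD l₀
    have hd : 0 < infDist xb (K xb l₀) := (hKcl.notMem_iff_infDist_pos hKne).mp hnot
    set d := infDist xb (K xb l₀) with hdd
    obtain ⟨U', hU', hU'sub⟩ := (hKcont xb hxbD).1 (thickening (d/2) (K xb l₀))
      isOpen_thickening (self_subset_thickening (half_pos hd) _)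
    obtain ⟨r, hr, hball⟩ := Metric.mem_nhdsWithin_iff.mp hU'
    have hE : S ∩ {p : Ω × Λ | p.2 ∈ ball l₀ r} ∈ f := by
      refine inter_mem self_mem_nhdsWithin ?_
      refine nhdsWithin_le_nhds (mem_of_superset
        (prod_mem_nhds univ_mem (ball_mem_nhds _ hr)) ?_)
      intro p hp
      exact hp.2
    obtain ⟨p, ⟨hpS, hpl⟩, hpA⟩ := hfreq (ball xb (min r (d/4)))
      (ball_mem_nhds _ (lt_min hr (by linarith))) _ hE
    have h1 : (χ p, p.2) ∈ U' := by
      refine hball ⟨?_, ⟨hχD p hpS, trivial⟩⟩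
      rw [← ball_prod_same]
      exact ⟨ball_subset_ball (min_le_left _ _) hpA, hpl⟩
    have h2 : χ p ∈ K (χ p) p.2 := by
      have h := hχ p hpS
      rw [hM₁] at h
      have h' := h.2.1
      rwa [(hKval _ (hχD p hpS) p.2).2.1.closure_eq] at h'
    have h3 : χ p ∈ thickening (d/2) (K xb l₀) := hU'sub _ h1 h2
    obtain ⟨z, hz, hdz⟩ := Metric.mem_thickening_iff.mp h3
    have h4 : d ≤ dist xb z := Metric.infDist_le_dist_of_mem hz
    have h5 : dist (χ p) xb < d/4 := lt_of_lt_of_le (mem_ball.mp hpA) (min_le_right _ _)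
    have h6 : dist xb z ≤ dist xb (χ p) + dist (χ p) z := dist_triangle _ _ _
    rw [dist_comm xb (χ p)] at h6
    linarith
  -- rotundity gives an interior point of the graph
  have hxbne : x₀ ≠ xb := fun h => hxbV (h ▸ hx₀V)
  have hp₀ : ((x₀, x₀) : X × X) ∈ GraphOn D (fun x => K x l₀) := ⟨hx₀D, hx₀K⟩
  have hq₀ : ((xb, xb) : X × X) ∈ GraphOn D (fun x => K x l₀) := ⟨hxbD, hxbK⟩
  obtain ⟨l, hl, hm⟩ := hKrot.2 _ hp₀ _ hq₀ hxbne hxbne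
  set G : Set (X × X) := GraphOn D (fun x => K x l₀) with hG
  set m : X × X := l • ((x₀, x₀) : X × X) + (1 - l) • ((xb, xb) : X × X) with hmdef
  have hmG : m ∈ G := hKrot.1 hp₀ hq₀ hl.1.le (by linarith [hl.2]) (by ring)
  have hmint : m ∈ interior G := by
    by_contra h
    exact hm ⟨subset_closure hmG, h⟩
  -- Step J: the F-condition holds uniformly near (x₀, u₀, l₀)
  have hnegCcl : IsClosed (-C : Set Y) := hCclosed.neg
  have hsubC : ((-C)ᶜ : Set Y) ⊆ (-(interior C))ᶜ :=
    compl_subset_compl.mpr (neg_subset_neg.mpr interior_subset)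
  have hKcomp : IsCompact (K x₀ l₀) :=
    hDcomp.of_isClosed_subset (hKval x₀ hx₀D l₀).2.1 (hKD x₀ hx₀D l₀)
  have hy' : ∀ y ∈ K x₀ l₀, ∃ r > 0, ∀ x ∈ ball x₀ r, x ∈ D → ∀ y' ∈ ball y r, y' ∈ D →
      ∀ u ∈ ball u₀ r, (F x y' u ∩ (-(interior C))ᶜ).Nonempty := by
    intro y hy
    have hyD : y ∈ D := hKD x₀ hx₀D l₀ hy
    obtain ⟨z, hzF, hzC⟩ := hF3 x₀ hx₀M y hy
    obtain ⟨N, hN, hNprop⟩ := hFlsc x₀ hx₀D y hyD z hzF ((-C)ᶜ) hnegCcl.isOpen_compl hzC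
    obtain ⟨r, hr, hballN⟩ := Metric.mem_nhdsWithin_iff.mp hN
    refine ⟨r, hr, fun x hx hxD y' hy'' hy'D u hu => ?_⟩
    have hmem : ((x, y', u) : X × X × Ω) ∈ N := by
      refine hballN ⟨?_, ⟨hxD, hy'D, trivial⟩⟩
      rw [← ball_prod_same, ← ball_prod_same]
      exact ⟨hx, hy'', hu⟩
    exact (hNprop _ hmem).mono (inter_subset_inter_right _ hsubC)
  choose rr hrrpos hrr using hy'
  obtain ⟨t, htsub⟩ := hKcomp.elim_nhds_subcover' (fun y hy => ball y (rr y hy))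
    (fun y hy => ball_mem_nhds _ (hrrpos y hy))
  have hW₁open : IsOpen (⋃ y ∈ t, ball (y : X) (rr y y.2)) :=
    isOpen_biUnion fun _ _ => isOpen_ball
  obtain ⟨U₂, hU₂, hU₂sub⟩ := (hKcont x₀ hx₀D).1 _ hW₁open htsub
  obtain ⟨r₂, hr₂, hballU₂⟩ := Metric.mem_nhdsWithin_iff.mp hU₂
  have htne : t.Nonempty := by
    obtain ⟨y₀, hy₀⟩ := (hKval x₀ hx₀D l₀).1
    obtain ⟨i, hi, -⟩ := mem_iUnion₂.mp (htsub hy₀)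
    exact ⟨i, hi⟩
  set r₃ : ℝ := t.inf' htne (fun y => rr y y.2) with hr₃
  have hr₃pos : 0 < r₃ := by
    rw [hr₃, Finset.lt_inf'_iff]
    exact fun y _ => hrrpos y y.2
  set r₁ : ℝ := min r₂ r₃ with hr₁def
  have hr₁pos : 0 < r₁ := lt_min hr₂ hr₃pos
  have hJ : ∀ x ∈ ball x₀ r₁, x ∈ D → ∀ u ∈ ball u₀ r₁, ∀ l' ∈ ball l₀ r₁, ∀ y ∈ K x l',
      (F x y u ∩ (-(interior C))ᶜ).Nonempty := by
    intro x hx hxD u hu l' hl' y hy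
    have hxl' : ((x, l') : X × Λ) ∈ U₂ := by
      refine hballU₂ ⟨?_, ⟨hxD, trivial⟩⟩
      rw [← ball_prod_same]
      exact ⟨ball_subset_ball (min_le_left _ _) hx, ball_subset_ball (min_le_left _ _) hl'⟩
    have hyW : y ∈ ⋃ y ∈ t, ball (y : X) (rr y y.2) := hU₂sub _ hxl' hy
    obtain ⟨i, hit, hyball⟩ := mem_iUnion₂.mp hyW
    have hle : r₁ ≤ rr i i.2 := le_trans (min_le_right _ _) (Finset.inf'_le _ hit)
    exact hrr (i : X) i.2 x (ball_subset_ball hle hx) hxD y hyball (hKD x hxD l' hy) u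
      (ball_subset_ball hle hu)
  -- Step I: choose w close to x₀ on the segment towards the interior point m
  obtain ⟨rV, hrV, hrVsub⟩ := Metric.isOpen_iff.mp hVopen x₀ hx₀V
  set ρ₀ : ℝ := min rV r₁ with hρ₀def
  have hρ₀pos : 0 < ρ₀ := lt_min hrV hr₁pos
  set xl : X := l • x₀ + (1 - l) • xb with hxldef
  have hmxl : m = (xl, xl) := by
    rw [hmdef, hxldef, Prod.ext_iff]
    constructor <;> simp [Prod.smul_def, Prod.fst_add, Prod.snd_add]
  have hn1 : (0:ℝ) < ‖xl - x₀‖ + 1 := by positivity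
  set σ : ℝ := min (1/2) (ρ₀ / (‖xl - x₀‖ + 1)) with hσdef
  have hσpos : 0 < σ := lt_min (by norm_num) (div_pos hρ₀pos hn1)
  have hσhalf : σ ≤ 1/2 := min_le_left _ _
  have hσle : σ ≤ ρ₀ / (‖xl - x₀‖ + 1) := min_le_right _ _
  set w : X := σ • xl + (1 - σ) • x₀ with hwdef
  have hwint : (w, w) ∈ interior G := by
    have h := hKrot.1.combo_interior_closure_mem_interior hmint (subset_closure hp₀)
      hσpos (by linarith : (0:ℝ) ≤ 1 - σ) (by ring)
    have heq : σ • m + (1 - σ) • ((x₀, x₀) : X × X) = (w, w) := by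
      rw [hmxl, hwdef, Prod.ext_iff]
      constructor <;> simp [Prod.smul_def, Prod.fst_add, Prod.snd_add]
    rwa [heq] at h
  have hwx₀ : dist w x₀ < ρ₀ := by
    rw [hwdef, dist_eq_norm]
    have heq : σ • xl + (1 - σ) • x₀ - x₀ = σ • (xl - x₀) := by
      rw [sub_smul, one_smul, smul_sub]; abel
    rw [heq, norm_smul, Real.norm_eq_abs, abs_of_pos hσpos]
    calc σ * ‖xl - x₀‖ ≤ (ρ₀ / (‖xl - x₀‖ + 1)) * ‖xl - x₀‖ :=
          mul_le_mul_of_nonneg_right hσle (norm_nonneg _)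
      _ < ρ₀ := by
          rw [div_mul_eq_mul_div, div_lt_iff₀ hn1]
          nlinarith [norm_nonneg (xl - x₀), hρ₀pos]
  have hwV : w ∈ V := hrVsub (mem_ball.mpr (lt_of_lt_of_le hwx₀ (min_le_left _ _)))
  have hwball₁ : w ∈ ball x₀ r₁ := mem_ball.mpr (lt_of_lt_of_le hwx₀ (min_le_right _ _))
  -- Step K: w remains a fixed point of K(w, ·) for parameters near l₀
  obtain ⟨ε, hε, hballG⟩ := Metric.isOpen_iff.mp isOpen_interior (w, w) hwint
  have hεG : ∀ a ∈ ball w ε, ∀ b ∈ ball w ε, a ∈ D ∧ b ∈ K a l₀ := by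
    intro a ha b hb
    have hab : ((a, b) : X × X) ∈ ball ((w, w) : X × X) ε := by
      rw [← ball_prod_same]; exact ⟨ha, hb⟩
    have hG2 : ((a, b) : X × X) ∈ G := interior_subset (hballG hab)
    exact hG2
  have hwD : w ∈ D := (hεG w (mem_ball_self hε) w (mem_ball_self hε)).1
  have hKwball : ball w ε ⊆ K w l₀ := fun b hb => (hεG w (mem_ball_self hε) b hb).2
  have hBsub : closedBall w (ε/2) ⊆ ball w ε := by
    intro z hz; rw [mem_closedBall] at hz; rw [mem_ball]; linarith
  have hBsubD : closedBall w (ε/2) ⊆ D := fun z hz => (hεG z (hBsub hz) w (mem_ball_self hε)).1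
  have hBcomp : IsCompact (closedBall w (ε/2)) :=
    hDcomp.of_isClosed_subset isClosed_closedBall hBsubD
  obtain ⟨t₂, ht₂sub⟩ := hBcomp.elim_nhds_subcover' (fun z _ => ball z (ε/16))
    (fun z _ => ball_mem_nhds _ (by positivity))
  set T : Set Λ := ⋂ i ∈ t₂, {l' : Λ | (K w l' ∩ ball (i : X) (ε/16)).Nonempty} with hTdef
  have hTnhds : T ∈ 𝓝 l₀ := by
    rw [hTdef, Filter.biInter_finset_mem]
    intro i _
    have hzK : (i : X) ∈ K w l₀ := hKwball (hBsub i.2)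
    obtain ⟨N, hN, hNp⟩ := (hKcont w hwD).2 (i : X) hzK (ball (i : X) (ε/16)) isOpen_ball
      (mem_ball_self (by positivity))
    obtain ⟨δ, hδ, hballN⟩ := Metric.mem_nhdsWithin_iff.mp hN
    refine mem_of_superset (ball_mem_nhds _ hδ) fun l' hl' => ?_
    have hmem : ((w, l') : X × Λ) ∈ N :=
      hballN ⟨by rw [← ball_prod_same]; exact ⟨mem_ball_self hδ, hl'⟩, ⟨hwD, trivial⟩⟩
    exact hNp _ hmem
  have hfix : ∀ l' ∈ T, w ∈ K w l' := by
    intro l' hl'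
    refine mem_of_closedBall_approx (hKval w hwD l').2.2 (hKval w hwD l').2.1 hε ?_
    intro z hz
    obtain ⟨i, hit, hzball⟩ := mem_iUnion₂.mp (ht₂sub hz)
    have hne : (K w l' ∩ ball (i : X) (ε/16)).Nonempty := by
      rw [hTdef] at hl'
      simp only [mem_iInter] at hl'
      exact hl' i hit
    obtain ⟨c, hcK, hci⟩ := hne
    refine ⟨c, hcK, ?_⟩
    have h1 : dist z (i : X) < ε/16 := mem_ball.mp hzball
    have h2 : dist (i : X) c < ε/16 := by rw [dist_comm]; exact mem_ball.mp hci
    have h3 : dist z c ≤ dist z (i : X) + dist (i : X) c := dist_triangle _ _ _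
    linarith
  -- Final contradiction
  obtain ⟨p, hpU, hpbad⟩ := hbad ((ball u₀ r₁) ×ˢ (ball l₀ r₁ ∩ T))
    (prod_mem_nhds (ball_mem_nhds _ hr₁pos) (inter_mem (ball_mem_nhds _ hr₁pos) hTnhds))
  have hpM : w ∈ M₁ p := by
    rw [hM₁]
    exact ⟨hwD, subset_closure (hfix p.2 hpU.2.2),
      fun y hy => hJ w hwball₁ hwD p.1 hpU.1 p.2 hpU.2.1 y hy⟩
  have hfin : w ∈ M₁ p ∩ V := ⟨hpM, hwV⟩
  rw [hpbad] at hfin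
  exact hfin
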